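/- The simplified third Helmholtz condition holds for the Christoffel connection of H (eq. (H3Simplified)): Let U ⊆ ℝⁿ be open and H : U → (Fin n → Fin n → ℝ) smooth with H(x) symmetric and invertible for every x. Let Γ^a_{bc} := Γ[H]^a_{bc} be the Christoffel symbols of H and let R_{abc}{}^d := ∂_b Γ^d_{ac} − ∂_a Γ^d_{bc} + Σ_e (Γ^d_{be} Γ^e_{ac} − Γ^d_{ae} Γ^e_{bc}) be the curvature components. Then for all x ∈ U, all v ∈ Fin n → ℝ and all indices i,k: Σ_{a,b} v^a v^b (Σ_c H_{ic}(x) R_{kab}{}^c(x) − Σ_c H_{kc}(x) R_{iab}{}^c(x)) = 0. -/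

import Mathlib

open scoped BigOperators

open scoped Matrix

/-- Partial derivative of `f` in the `a`-th coordinate direction of `ℝⁿ`. -/
noncomputable def pd {n : ℕ} (f : (Fin n → ℝ) → ℝ) (a : Fin n) (x : Fin n → ℝ) : ℝ :=
  fderiv ℝ f x (Pi.single a 1)

/-- Matrix inverse of a square array of reals. -/
noncomputable def minv {n : ℕ} (A : Fin n → Fin n → ℝ) : Fin n → Fin n → ℝ :=
  fun a b => (Matrix.of A)⁻¹ a b

/-- Christoffel symbols `Γ[H]^a_{bc}(x)` of a (pointwise symmetric, invertible) tensor `H`. -/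
noncomputable def christoffel {n : ℕ} (H : (Fin n → ℝ) → Fin n → Fin n → ℝ)
    (x : Fin n → ℝ) (a b c : Fin n) : ℝ :=
  (1 / 2) * ∑ d, minv (H x) a d *
    (pd (fun y => H y c d) b x + pd (fun y => H y b d) c x - pd (fun y => H y b c) d x)

/-- First derivative `γ'^a(t)` of a curve in `ℝⁿ`. -/
noncomputable def cderiv {n : ℕ} (γ : ℝ → Fin n → ℝ) (a : Fin n) (t : ℝ) : ℝ :=
  deriv (fun s => γ s a) t

/-- Second derivative `γ''^a(t)` of a curve in `ℝⁿ`. -/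
noncomputable def cderiv2 {n : ℕ} (γ : ℝ → Fin n → ℝ) (a : Fin n) (t : ℝ) : ℝ :=
  deriv (cderiv γ a) t

/-- Curvature components
`R_{abc}{}^d = ∂_b Γ^d_{ac} − ∂_a Γ^d_{bc} + Σ_e (Γ^d_{be} Γ^e_{ac} − Γ^d_{ae} Γ^e_{bc})`. -/
noncomputable def curv {n : ℕ} (Γ : (Fin n → ℝ) → Fin n → Fin n → Fin n → ℝ)
    (x : Fin n → ℝ) (a b c d : Fin n) : ℝ :=
  pd (fun y => Γ y d a c) b x - pd (fun y => Γ y d b c) a x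
    + ∑ e, (Γ x d b e * Γ x e a c - Γ x d a e * Γ x e b c)

/-- `R̄_{abcd} = Σ_k R_{abc}{}^k H_{kd}`, with `R` the curvature of the Christoffel symbols
of `H`. -/
noncomputable def Rbar {n : ℕ} (H : (Fin n → ℝ) → Fin n → Fin n → ℝ)
    (x : Fin n → ℝ) (a b c d : Fin n) : ℝ :=
  ∑ k, curv (christoffel H) x a b c k * H x k d

/-! ### Auxiliary material for the proof -/

section Aux

variable {n : ℕ} {x : Fin n → ℝ} {f g : (Fin n → ℝ) → ℝ}

lemma pd_congr (h : f =ᶠ[nhds x] g) (a : Fin n) : pd f a x = pd g a x := by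
  unfold pd; rw [h.fderiv_eq]

lemma pd_add (hf : DifferentiableAt ℝ f x) (hg : DifferentiableAt ℝ g x) (a : Fin n) :
    pd (fun y => f y + g y) a x = pd f a x + pd g a x := by
  simp [pd, fderiv_fun_add hf hg]

lemma pd_sub (hf : DifferentiableAt ℝ f x) (hg : DifferentiableAt ℝ g x) (a : Fin n) :
    pd (fun y => f y - g y) a x = pd f a x - pd g a x := by
  simp [pd, fderiv_fun_sub hf hg]

lemma pd_mul (hf : DifferentiableAt ℝ f x) (hg : DifferentiableAt ℝ g x) (a : Fin n) :
    pd (fun y => f y * g y) a x = f x * pd g a x + g x * pd f a x := by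
  simp [pd, fderiv_fun_mul hf hg]

lemma pd_const_mul (hf : DifferentiableAt ℝ f x) (c : ℝ) (a : Fin n) :
    pd (fun y => c * f y) a x = c * pd f a x := by
  simp [pd, fderiv_const_mul hf c]

lemma pd_sum {ι : Type*} (s : Finset ι) (F : ι → (Fin n → ℝ) → ℝ)
    (h : ∀ i ∈ s, DifferentiableAt ℝ (F i) x) (a : Fin n) :
    pd (fun y => ∑ i ∈ s, F i y) a x = ∑ i ∈ s, pd (F i) a x := by
  simp [pd, fderiv_fun_sum h]

lemma pd_comm (hf : ContDiffAt ℝ (⊤ : ℕ∞) f x) (a b : Fin n) :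
    pd (fun y => pd f b y) a x = pd (fun y => pd f a y) b x := by
  have hd : DifferentiableAt ℝ (fderiv ℝ f) x := by
    have := hf.fderiv_right (m := (1 : WithTop ℕ∞)) (WithTop.coe_le_coe.mpr le_top)
    exact this.differentiableAt one_ne_zero
  have key : ∀ u w : Fin n → ℝ,
      fderiv ℝ (fun y => fderiv ℝ f y u) x w = fderiv ℝ (fderiv ℝ f) x w u := by
    intro u w
    rw [fderiv_clm_apply hd (differentiableAt_const u)]
    simp
  have hs : IsSymmSndFDerivAt ℝ f x := hf.isSymmSndFDerivAt (by rw [minSmoothness_of_isRCLikeNormedField]; exact WithTop.coe_le_coe.mpr (le_top : (2 : ℕ∞) ≤ ⊤))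
  simp only [pd]
  rw [key, key, hs (Pi.single a 1) (Pi.single b 1)]

lemma diffAt_finset_prod {ι : Type*} [DecidableEq ι] (s : Finset ι) (F : ι → (Fin n → ℝ) → ℝ)
    (h : ∀ i ∈ s, DifferentiableAt ℝ (F i) x) :
    DifferentiableAt ℝ (fun y => ∏ i ∈ s, F i y) x := by
  induction s using Finset.induction_on with
  | empty => simp only [Finset.prod_empty]; exact differentiableAt_const (1 : ℝ)
  | @insert j s hji ih =>
    simp only [Finset.prod_insert hji]
    exact (h j (Finset.mem_insert_self j s)).mul
      (ih fun i hi => h i (Finset.mem_insert_of_mem hi))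

lemma diffAt_det (M : (Fin n → ℝ) → Matrix (Fin n) (Fin n) ℝ)
    (hM : ∀ p q, DifferentiableAt ℝ (fun y => M y p q) x) :
    DifferentiableAt ℝ (fun y => (M y).det) x := by
  simp only [Matrix.det_apply, Units.smul_def, zsmul_eq_mul]
  exact DifferentiableAt.fun_sum fun σ _ =>
    ((diffAt_finset_prod Finset.univ (fun i y => M y (σ i) i)
      (fun i _ => hM (σ i) i)).const_mul _)

lemma minv_entry_eq (A : Fin n → Fin n → ℝ) (a b : Fin n) :
    minv A a b = (Matrix.of A).det⁻¹ * (Matrix.of A).adjugate a b := by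
  simp [minv, Matrix.inv_def, Ring.inverse_eq_inv', Matrix.smul_apply, smul_eq_mul]

lemma diffAt_minv (H : (Fin n → ℝ) → Fin n → Fin n → ℝ)
    (hent : ∀ p q, DifferentiableAt ℝ (fun y => H y p q) x)
    (hdet : (Matrix.of (H x)).det ≠ 0) (a b : Fin n) :
    DifferentiableAt ℝ (fun y => minv (H y) a b) x := by
  simp only [minv_entry_eq]
  have hdetd : DifferentiableAt ℝ (fun y => (Matrix.of (H y)).det) x :=
    diffAt_det _ (fun p q => hent p q)
  apply (hdetd.inv hdet).mul
  simp only [Matrix.adjugate_apply]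
  apply diffAt_det
  intro p q
  simp only [Matrix.updateRow_apply]
  split_ifs
  · exact differentiableAt_const _
  · exact hent p q

lemma minv_symm (A : Fin n → Fin n → ℝ) (hA : ∀ a b, A a b = A b a) (a b : Fin n) :
    minv A a b = minv A b a := by
  have hT : (Matrix.of A)ᵀ = Matrix.of A := by
    ext p q; simp [Matrix.transpose_apply, hA p q]
  have h := Matrix.transpose_nonsing_inv (Matrix.of A)
  have h2 : ((Matrix.of A)⁻¹)ᵀ = (Matrix.of A)⁻¹ := by rw [h, hT]
  calc minv A a b = ((Matrix.of A)⁻¹)ᵀ b a := rfl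
    _ = (Matrix.of A)⁻¹ b a := by rw [h2]

/-- The Christoffel symbols of `H` with the upper index lowered: no matrix inverse involved. -/
noncomputable def lowc {n : ℕ} (H : (Fin n → ℝ) → Fin n → Fin n → ℝ)
    (x : Fin n → ℝ) (c p q : Fin n) : ℝ :=
  (1 / 2) * (pd (fun y => H y q c) p x + pd (fun y => H y p c) q x - pd (fun y => H y p q) c x)

/-- A contraction of lowered Christoffel symbols against the inverse metric. -/
noncomputable def Qf {n : ℕ} (H : (Fin n → ℝ) → Fin n → Fin n → ℝ)
    (x : Fin n → ℝ) (p q r s : Fin n) : ℝ :=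
  ∑ c, ∑ d, lowc H x c p q * (minv (H x) c d * lowc H x d r s)

lemma christoffel_eq (H : (Fin n → ℝ) → Fin n → Fin n → ℝ) (x : Fin n → ℝ) (a b c : Fin n) :
    christoffel H x a b c = ∑ d, minv (H x) a d * lowc H x d b c := by
  unfold christoffel lowc
  rw [Finset.mul_sum]
  exact Finset.sum_congr rfl fun d _ => by ring

lemma contract (H : (Fin n → ℝ) → Fin n → Fin n → ℝ) {y : Fin n → ℝ}
    (hinv : IsUnit (Matrix.of (H y)).det) (i p q : Fin n) :
    ∑ c, H y i c * christoffel H y c p q = lowc H y i p q := by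
  simp only [christoffel_eq]
  have h1 : ∀ d, ∑ c, H y i c * minv (H y) c d = if i = d then 1 else 0 := by
    intro d
    have h0 := Matrix.mul_nonsing_inv (Matrix.of (H y)) hinv
    have h2 := congrFun (congrFun h0 i) d
    simpa [Matrix.mul_apply, Matrix.one_apply, minv] using h2
  calc ∑ c, H y i c * ∑ d, minv (H y) c d * lowc H y d p q
      = ∑ c, ∑ d, H y i c * minv (H y) c d * lowc H y d p q := by
        exact Finset.sum_congr rfl fun c _ => by
          rw [Finset.mul_sum]; exact Finset.sum_congr rfl fun d _ => by ring
    _ = ∑ d, ∑ c, H y i c * minv (H y) c d * lowc H y d p q := Finset.sum_comm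
    _ = ∑ d, (∑ c, H y i c * minv (H y) c d) * lowc H y d p q := by
        exact Finset.sum_congr rfl fun d _ => (Finset.sum_mul ..).symm
    _ = ∑ d, (if i = d then 1 else 0) * lowc H y d p q := by
        exact Finset.sum_congr rfl fun d _ => by rw [h1 d]
    _ = lowc H y i p q := by simp

lemma sum_anti (v : Fin n → ℝ) (W : Fin n → Fin n → ℝ) (h : ∀ a b, W a b + W b a = 0) :
    ∑ a, ∑ b, v a * v b * W a b = 0 := by
  have h2 : ∑ a, ∑ b, v a * v b * W a b = ∑ a, ∑ b, v a * v b * W b a := by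
    rw [Finset.sum_comm]
    exact Finset.sum_congr rfl fun a _ => Finset.sum_congr rfl fun b _ => by ring
  have h1 : (∑ a, ∑ b, v a * v b * W a b) + (∑ a, ∑ b, v a * v b * W a b)
      = ∑ a, ∑ b, (v a * v b * W a b + v a * v b * W b a) := by
    nth_rewrite 2 [h2]
    rw [← Finset.sum_add_distrib]
    exact Finset.sum_congr rfl fun a _ => (Finset.sum_add_distrib).symm
  have h3 : ∑ a, ∑ b, (v a * v b * W a b + v a * v b * W b a) = (0 : ℝ) := by
    refine Finset.sum_eq_zero fun a _ => Finset.sum_eq_zero fun b _ => ?_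
    rw [← mul_add, h a b, mul_zero]
  linarith

end Aux

/-- **The simplified third Helmholtz condition holds for the Christoffel connection of `H`**:
`Σ_{a,b} v^a v^b (Σ_c H_{ic} R_{kab}{}^c − Σ_c H_{kc} R_{iab}{}^c) = 0`. -/
theorem helmholtz_three_for_christoffel {n : ℕ} (U : Set (Fin n → ℝ)) (hU : IsOpen U)
    (H : (Fin n → ℝ) → Fin n → Fin n → ℝ)
    (hH : ContDiffOn ℝ (⊤ : ℕ∞) H U)
    (hHsym : ∀ x ∈ U, ∀ a b, H x a b = H x b a)
    (hHinv : ∀ x ∈ U, IsUnit (Matrix.of (H x)).det) :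
    ∀ x ∈ U, ∀ (v : Fin n → ℝ) (i k : Fin n),
      ∑ a, ∑ b, v a * v b *
        (∑ c, H x i c * curv (christoffel H) x k a b c
          - ∑ c, H x k c * curv (christoffel H) x i a b c) = 0 := by
  intro x hx v i k
  have hUx : U ∈ nhds x := hU.mem_nhds hx
  -- smoothness of the entries of H
  have hent : ∀ y ∈ U, ∀ p q, ContDiffAt ℝ (⊤ : ℕ∞) (fun z => H z p q) y := by
    intro y hy p q
    have h1 : ContDiffAt ℝ (⊤ : ℕ∞) H y := hH.contDiffAt (hU.mem_nhds hy)
    exact contDiffAt_pi.mp (contDiffAt_pi.mp h1 p) q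
  have hentx : ∀ p q, DifferentiableAt ℝ (fun z => H z p q) x := fun p q =>
    (hent x hx p q).differentiableAt (by simp)
  -- smoothness of first partials of entries of H
  have hpdHc : ∀ dir p q : Fin n,
      ContDiffAt ℝ (⊤ : ℕ∞) (fun y => pd (fun z => H z p q) dir y) x := by
    intro dir p q
    have h1 : ContDiffAt ℝ ((⊤ : ℕ∞) : WithTop ℕ∞) (fderiv ℝ (fun z => H z p q)) x :=
      (hent x hx p q).fderiv_right (m := ((⊤ : ℕ∞) : WithTop ℕ∞)) (by simp)
    exact h1.clm_apply contDiffAt_const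
  have hpdHd : ∀ dir p q : Fin n,
      DifferentiableAt ℝ (fun y => pd (fun z => H z p q) dir y) x := fun dir p q =>
    (hpdHc dir p q).differentiableAt (by simp)
  -- differentiability of the inverse-metric entries
  have hdiffmin : ∀ a b : Fin n, DifferentiableAt ℝ (fun y => minv (H y) a b) x :=
    diffAt_minv H hentx (hHinv x hx).ne_zero
  -- differentiability of the Christoffel symbols
  have hΓd : ∀ c p q : Fin n, DifferentiableAt ℝ (fun y => christoffel H y c p q) x := by
    intro c p q
    exact (DifferentiableAt.fun_sum fun d _ => (hdiffmin c d).mul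
      (((hpdHd p q d).add (hpdHd q p d)).sub (hpdHd d p q))).const_mul (1 / 2)
  -- H is symmetric, also under first partials, near x
  have hHsymF : ∀ y ∈ U, ∀ p q dir : Fin n,
      pd (fun z => H z p q) dir y = pd (fun z => H z q p) dir y := by
    intro y hy p q dir
    exact pd_congr (Filter.eventuallyEq_of_mem (hU.mem_nhds hy)
      (fun z hz => hHsym z hz p q)) dir
  -- symmetry of lowc in its last two arguments
  have hlowcsym : ∀ y ∈ U, ∀ c p q : Fin n, lowc H y c p q = lowc H y c q p := by
    intro y hy c p q
    unfold lowc
    rw [hHsymF y hy p q c]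
    ring
  -- the first partials of H in terms of lowered Christoffel symbols
  have hpdH_eq : ∀ p q w : Fin n,
      pd (fun y => H y p q) w x = lowc H x p w q + lowc H x q w p := by
    intro p q w
    unfold lowc
    rw [hHsymF x hx q p w]
    ring
  -- the fundamental contraction identity, valid on all of U
  have hcontr : ∀ y ∈ U, ∀ i' p q : Fin n,
      ∑ c, H y i' c * christoffel H y c p q = lowc H y i' p q := fun y hy i' p q =>
    contract H (hHinv y hy) i' p q
  -- product rule for the contraction identity
  have hprodrule : ∀ i' p q w : Fin n,
      ∑ c, H x i' c * pd (fun y => christoffel H y c p q) w x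
      = pd (fun y => lowc H y i' p q) w x
        - ∑ c, pd (fun y => H y i' c) w x * christoffel H x c p q := by
    intro i' p q w
    have h1 : pd (fun y => ∑ c, H y i' c * christoffel H y c p q) w x
        = pd (fun y => lowc H y i' p q) w x :=
      pd_congr (Filter.eventuallyEq_of_mem hUx (fun y hy => hcontr y hy i' p q)) w
    have h2 : pd (fun y => ∑ c, H y i' c * christoffel H y c p q) w x
        = ∑ c, (H x i' c * pd (fun y => christoffel H y c p q) w x
            + christoffel H x c p q * pd (fun y => H y i' c) w x) := by
      rw [pd_sum Finset.univ (fun c y => H y i' c * christoffel H y c p q)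
        (fun c _ => (hentx i' c).mul (hΓd c p q)) w]
      exact Finset.sum_congr rfl fun c _ => pd_mul (hentx i' c) (hΓd c p q) w
    have h3 : ∑ c, (H x i' c * pd (fun y => christoffel H y c p q) w x
            + christoffel H x c p q * pd (fun y => H y i' c) w x)
        = (∑ c, H x i' c * pd (fun y => christoffel H y c p q) w x)
          + ∑ c, pd (fun y => H y i' c) w x * christoffel H x c p q := by
      rw [← Finset.sum_add_distrib]
      exact Finset.sum_congr rfl fun c _ => by ring
    linarith [h1, h2.symm.trans h1, h3]
  -- Step A: the contracted curvature in terms of lowered Christoffel symbols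
  have stepA : ∀ i' k' a b : Fin n,
      ∑ c, H x i' c * curv (christoffel H) x k' a b c
      = pd (fun y => lowc H y i' k' b) a x - pd (fun y => lowc H y i' a b) k' x
        - (∑ c, lowc H x c a i' * christoffel H x c k' b)
        + ∑ c, lowc H x c k' i' * christoffel H x c a b := by
    intro i' k' a b
    have hsplit : ∑ c, H x i' c * curv (christoffel H) x k' a b c
        = (∑ c, H x i' c * pd (fun y => christoffel H y c k' b) a x)
          - (∑ c, H x i' c * pd (fun y => christoffel H y c a b) k' x)
          + ∑ c, ∑ e, (H x i' c * (christoffel H x c a e * christoffel H x e k' b)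
              - H x i' c * (christoffel H x c k' e * christoffel H x e a b)) := by
      rw [← Finset.sum_sub_distrib, ← Finset.sum_add_distrib]
      refine Finset.sum_congr rfl fun c _ => ?_
      simp only [curv, mul_add, mul_sub, Finset.mul_sum]
    have hC : ∑ c, ∑ e, (H x i' c * (christoffel H x c a e * christoffel H x e k' b)
          - H x i' c * (christoffel H x c k' e * christoffel H x e a b))
        = (∑ c, lowc H x i' a c * christoffel H x c k' b)
          - ∑ c, lowc H x i' k' c * christoffel H x c a b := by
      calc ∑ c, ∑ e, (H x i' c * (christoffel H x c a e * christoffel H x e k' b)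
            - H x i' c * (christoffel H x c k' e * christoffel H x e a b))
          = ∑ e, ∑ c, (H x i' c * (christoffel H x c a e * christoffel H x e k' b)
            - H x i' c * (christoffel H x c k' e * christoffel H x e a b)) := Finset.sum_comm
        _ = ∑ e, ((∑ c, H x i' c * christoffel H x c a e) * christoffel H x e k' b
            - (∑ c, H x i' c * christoffel H x c k' e) * christoffel H x e a b) := by
            refine Finset.sum_congr rfl fun e _ => ?_
            rw [Finset.sum_sub_distrib, Finset.sum_mul, Finset.sum_mul]
            refine congrArg₂ (· - ·) (Finset.sum_congr rfl fun c _ => by ring)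
              (Finset.sum_congr rfl fun c _ => by ring)
        _ = ∑ e, (lowc H x i' a e * christoffel H x e k' b
            - lowc H x i' k' e * christoffel H x e a b) := by
            refine Finset.sum_congr rfl fun e _ => by
              rw [hcontr x hx i' a e, hcontr x hx i' k' e]
        _ = (∑ e, lowc H x i' a e * christoffel H x e k' b)
            - ∑ e, lowc H x i' k' e * christoffel H x e a b := Finset.sum_sub_distrib _ _
    have hA := hprodrule i' k' b a
    have hB := hprodrule i' a b k'
    have hA2 : ∑ c, pd (fun y => H y i' c) a x * christoffel H x c k' b
        = (∑ c, lowc H x i' a c * christoffel H x c k' b)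
          + ∑ c, lowc H x c a i' * christoffel H x c k' b := by
      rw [← Finset.sum_add_distrib]
      refine Finset.sum_congr rfl fun c _ => by rw [hpdH_eq i' c a]; ring
    have hB2 : ∑ c, pd (fun y => H y i' c) k' x * christoffel H x c a b
        = (∑ c, lowc H x i' k' c * christoffel H x c a b)
          + ∑ c, lowc H x c k' i' * christoffel H x c a b := by
      rw [← Finset.sum_add_distrib]
      refine Finset.sum_congr rfl fun c _ => by rw [hpdH_eq i' c k']; ring
    linarith [hsplit, hC, hA, hB, hA2, hB2]
  -- expansion of the derivative of lowc in second partials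
  have hpdlowc : ∀ w c p q : Fin n, pd (fun y => lowc H y c p q) w x
      = (1 / 2) * (pd (fun y => pd (fun z => H z q c) p y) w x
          + pd (fun y => pd (fun z => H z p c) q y) w x
          - pd (fun y => pd (fun z => H z p q) c y) w x) := by
    intro w c p q
    calc pd (fun y => lowc H y c p q) w x
        = pd (fun y => (1 / 2) * (pd (fun z => H z q c) p y + pd (fun z => H z p c) q y
            - pd (fun z => H z p q) c y)) w x := rfl
      _ = (1 / 2) * pd (fun y => pd (fun z => H z q c) p y + pd (fun z => H z p c) q y
            - pd (fun z => H z p q) c y) w x :=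
          pd_const_mul (((hpdHd p q c).add (hpdHd q p c)).sub (hpdHd c p q)) (1 / 2) w
      _ = (1 / 2) * (pd (fun y => pd (fun z => H z q c) p y) w x
            + pd (fun y => pd (fun z => H z p c) q y) w x
            - pd (fun y => pd (fun z => H z p q) c y) w x) := by
          rw [pd_sub ((hpdHd p q c).fun_add (hpdHd q p c)) (hpdHd c p q) w,
            pd_add (hpdHd p q c) (hpdHd q p c) w]
  -- symmetry of second partials (Schwarz)
  have hD2s1 : ∀ w dir p q : Fin n,
      pd (fun y => pd (fun z => H z p q) dir y) w x
      = pd (fun y => pd (fun z => H z p q) w y) dir x :=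
    fun w dir p q => pd_comm (hent x hx p q) w dir
  have hD2s2 : ∀ w dir p q : Fin n,
      pd (fun y => pd (fun z => H z p q) dir y) w x
      = pd (fun y => pd (fun z => H z q p) dir y) w x := by
    intro w dir p q
    exact pd_congr (Filter.eventuallyEq_of_mem hUx
      (fun y hy => hHsymF y hy p q dir)) w
  -- Q-tensor identities
  have hΓlow : ∀ p q r s : Fin n,
      ∑ c, lowc H x c p q * christoffel H x c r s = Qf H x p q r s := by
    intro p q r s
    unfold Qf
    refine Finset.sum_congr rfl fun c _ => ?_
    rw [christoffel_eq, Finset.mul_sum]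
  have hQswap : ∀ p q r s : Fin n, Qf H x p q r s = Qf H x r s p q := by
    intro p q r s
    unfold Qf
    rw [Finset.sum_comm]
    refine Finset.sum_congr rfl fun u _ => Finset.sum_congr rfl fun w _ => ?_
    rw [minv_symm (H x) (hHsym x hx) w u]
    ring
  have hQL : ∀ p q r s : Fin n, Qf H x p q r s = Qf H x q p r s := by
    intro p q r s
    unfold Qf
    exact Finset.sum_congr rfl fun c _ => Finset.sum_congr rfl fun d _ => by
      rw [hlowcsym x hx c p q]
  -- reduce to antisymmetry of the summand
  refine sum_anti v _ ?_
  intro a b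
  rw [stepA i k a b, stepA k i a b, stepA i k b a, stepA k i b a]
  simp only [hpdlowc]
  have hq1 : Qf H x a i k b = Qf H x b k i a :=
    (hQL a i k b).trans ((hQswap i a k b).trans (hQL k b i a))
  have hq2 : Qf H x a k i b = Qf H x b i k a :=
    (hQL a k i b).trans ((hQswap k a i b).trans (hQL i b k a))
  have f1 := hΓlow a i k b
  have f2 := hΓlow a k i b
  have f3 := hΓlow b i k a
  have f4 := hΓlow b k i a
  have g1 : ∑ c, lowc H x c k i * christoffel H x c a b
      = ∑ c, lowc H x c i k * christoffel H x c a b :=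
    Finset.sum_congr rfl fun c _ => by rw [hlowcsym x hx c k i]
  have g2 : ∑ c, lowc H x c k i * christoffel H x c b a
      = ∑ c, lowc H x c i k * christoffel H x c b a :=
    Finset.sum_congr rfl fun c _ => by rw [hlowcsym x hx c k i]
  have e1 := hD2s1 a k b i
  have e2 := hD2s2 a k i b
  have e3 := hD2s2 a b k i
  have e4 := hD2s2 b a k i
  have e5 := hD2s2 a i k b
  have e6 := hD2s1 a i b k
  have e7 := hD2s1 k b a i
  have e8 := hD2s2 b k i a
  have e9 := hD2s1 k i a b
  have e10 := hD2s1 k i b a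
  have e11 := hD2s2 b i k a
  have e12 := hD2s1 b i a k
  linarith [hq1, hq2, f1, f2, f3, f4, g1, g2,
    e1, e2, e3, e4, e5, e6, e7, e8, e9, e10, e11, e12]
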